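/- The restriction map π_n: A_R(n,m) → A_R(n−1,m), sending x_i(n) ↦ 0 and x_i(j) ↦ x_i(j) for j ≤ n−1, maps the S_n-invariants of each multidegree-a component surjectively onto the S_{n−1}-invariants: π_n(A_R(n,m,a)^{S_n}) = A_R(n−1,m,a)^{S_{n−1}} for all a ∈ ℕ^m. -/

import Mathlib

open MvPolynomial Finset
open scoped Classical

noncomputable section

variable {R : Type*} [CommRing R]

/-- f(j): substitution y_i ↦ x_i(j). -/
def subst (m n : ℕ) (f : MvPolynomial (Fin m) R) (j : Fin n) :
    MvPolynomial (Fin m × Fin n) R :=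
  rename (fun i => (i, j)) f

/-- the action of σ ∈ Sₙ on A_R(n,m). -/
def permRename (m n : ℕ) (σ : Equiv.Perm (Fin n)) :
    MvPolynomial (Fin m × Fin n) R →ₐ[R] MvPolynomial (Fin m × Fin n) R :=
  rename (fun q => (q.1, σ q.2))

/-- invariant submodule A_R(n,m)^{Sₙ}. -/
def invSub (R : Type*) [CommRing R] (m n : ℕ) :
    Submodule R (MvPolynomial (Fin m × Fin n) R) where
  carrier := {p | ∀ σ : Equiv.Perm (Fin n), permRename m n σ p = p}
  add_mem' := fun ha hb σ => by simp [map_add, ha σ, hb σ]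
  zero_mem' := fun σ => by simp
  smul_mem' := fun c p hp σ => by simp [map_smul, hp σ]

/-- invariant subalgebra A_R(n,m)^{Sₙ}. -/
def invAlg (R : Type*) [CommRing R] (m n : ℕ) :
    Subalgebra R (MvPolynomial (Fin m × Fin n) R) where
  carrier := {p | ∀ σ : Equiv.Perm (Fin n), permRename m n σ p = p}
  add_mem' := fun ha hb σ => by simp [map_add, ha σ, hb σ]
  mul_mem' := fun ha hb σ => by simp [map_mul, ha σ, hb σ]
  algebraMap_mem' := fun r σ => by simp [permRename]

/-- e_α(f): coefficient of t^α in ∏ᵢ (1 + ∑ₕ tₕ fₕ(i)). -/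
def eAlpha (m n : ℕ) {ι : Type*} [Fintype ι] (f : ι → MvPolynomial (Fin m) R) (α : ι → ℕ) :
    MvPolynomial (Fin m × Fin n) R :=
  coeff (Finsupp.equivFunOnFinite.symm α)
    (∏ i : Fin n, (1 + ∑ h : ι, X h * C (subst m n (f h) i)))

/-- k-th elementary symmetric polynomial evaluated at v(1),…,v(n). -/
def esymVal {S : Type*} [CommRing S] (n : ℕ) (v : Fin n → S) (k : ℕ) : S :=
  ∑ A ∈ Finset.powersetCard k (Finset.univ : Finset (Fin n)), ∏ j ∈ A, v j

/-- multidegree of a monomial exponent. -/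
def wdeg (m n : ℕ) (d : Fin m × Fin n →₀ ℕ) : Fin m → ℕ := fun i => ∑ j : Fin n, d (i, j)

/-- multidegree-a component of A_R(n,m). -/
def comp (R : Type*) [CommRing R] (m n : ℕ) (a : Fin m → ℕ) :
    Submodule R (MvPolynomial (Fin m × Fin n) R) where
  carrier := {p | ∀ d ∈ p.support, wdeg m n d = a}
  add_mem' := fun ha hb d hd => by
    rcases Finset.mem_union.1 (MvPolynomial.support_add hd) with h | h
    · exact ha d h
    · exact hb d h
  zero_mem' := fun d hd => by simp at hd
  smul_mem' := fun c p hp d hd => hp d (MvPolynomial.support_smul hd)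

/-- the restriction map πₙ₊₁ : A_R(n+1,m) → A_R(n,m), x_i(n+1) ↦ 0. -/
def projDown (R : Type*) [CommRing R] (m n : ℕ) :
    MvPolynomial (Fin m × Fin (n+1)) R →ₐ[R] MvPolynomial (Fin m × Fin n) R :=
  aeval (fun p : Fin m × Fin (n+1) =>
    if h : (p.2 : ℕ) < n then X (p.1, ⟨p.2, h⟩) else 0)

/-- e_α for finitely supported α : M_m⁺ → ℕ. -/
def eAlphaM (R : Type*) [CommRing R] (m n : ℕ) (α : {d : Fin m →₀ ℕ // d ≠ 0} →₀ ℕ) :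
    MvPolynomial (Fin m × Fin n) R :=
  eAlpha m n (fun l => monomial ((α.support.equivFin.symm l) : {d : Fin m →₀ ℕ // d ≠ 0}).1 (1 : R))
    (fun l => α (α.support.equivFin.symm l))

/-- a monomial of positive degree is primitive if it is not a proper power. -/
def Primitive (m : ℕ) (d : Fin m →₀ ℕ) : Prop :=
  d ≠ 0 ∧ ∀ (e : Fin m →₀ ℕ) (k : ℕ), 2 ≤ k → d ≠ k • e


def pcE (m : ℕ) {k l : ℕ} (g : Fin l → Fin k) (e : Fin m × Fin k →₀ ℕ) :
    Fin m × Fin l →₀ ℕ :=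
  Finsupp.equivFunOnFinite.symm fun x => e (x.1, g x.2)

@[simp] lemma pcE_apply (m : ℕ) {k l : ℕ} (g : Fin l → Fin k) (e : Fin m × Fin k →₀ ℕ)
    (i : Fin m) (j : Fin l) : pcE m g e (i, j) = e (i, g j) := rfl

lemma pcE_pcE (m : ℕ) {k l r : ℕ} (g : Fin l → Fin k) (h : Fin r → Fin l)
    (e : Fin m × Fin k →₀ ℕ) : pcE m h (pcE m g e) = pcE m (g ∘ h) e := by
  ext ⟨i, j⟩; rfl

lemma coeff_permRename {m k : ℕ} (σ : Equiv.Perm (Fin k))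
    (p : MvPolynomial (Fin m × Fin k) R) (x : Fin m × Fin k →₀ ℕ) :
    coeff x (permRename m k σ p) = coeff (pcE m (⇑σ) x) p := by
  have hf : Function.Injective (fun y : Fin m × Fin k => (y.1, σ y.2)) := by
    intro a b hab
    simp only [Prod.mk.injEq] at hab
    exact Prod.ext hab.1 (σ.injective hab.2)
  have hx : x = Finsupp.mapDomain (fun y : Fin m × Fin k => (y.1, σ y.2)) (pcE m (⇑σ) x) := by
    have : (fun y : Fin m × Fin k => (y.1, σ y.2))
        = ⇑(Equiv.prodCongr (Equiv.refl (Fin m)) σ) := by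
      funext y; exact Prod.ext rfl rfl
    rw [this]
    ext y
    rw [Finsupp.mapDomain_equiv_apply]
    rcases y with ⟨i, j⟩
    simp
  conv_lhs => rw [hx]
  exact coeff_rename_mapDomain _ hf p _

section Key
variable {m n : ℕ}

lemma coeff_of_inv {q : MvPolynomial (Fin m × Fin n) R}
    (hq : ∀ σ : Equiv.Perm (Fin n), permRename m n σ q = q)
    (σ : Equiv.Perm (Fin n)) (x : Fin m × Fin n →₀ ℕ) :
    coeff (pcE m (⇑σ) x) q = coeff x q := by
  conv_rhs => rw [← hq σ]
  rw [coeff_permRename]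

/-- KEY: if `e` has zero columns at `a` and `b`, `g` injective missing `a`, then reading `e`
through `g` or through `b.succAbove` gives the same coefficient in an invariant `q`. -/
lemma key_coeff {q : MvPolynomial (Fin m × Fin n) R}
    (hq : ∀ σ : Equiv.Perm (Fin n), permRename m n σ q = q)
    (e : Fin m × Fin (n+1) →₀ ℕ) (a b : Fin (n+1))
    (ha : ∀ i, e (i, a) = 0) (hb : ∀ i, e (i, b) = 0)
    (g : Fin n → Fin (n+1)) (hg : Function.Injective g) (hag : ∀ j, g j ≠ a) :
    coeff (pcE m g e) q = coeff (pcE m b.succAbove e) q := by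
  have hswap : ∀ j : Fin n, Equiv.swap a b (g j) ≠ b := by
    intro j
    by_cases hgb : g j = b
    · rw [hgb, Equiv.swap_apply_right]
      intro hab
      exact hag j (hgb.trans hab.symm)
    · rw [Equiv.swap_apply_of_ne_of_ne (hag j) hgb]
      exact hgb
  set ρ : Fin n → Fin n := fun j => (Fin.exists_succAbove_eq (hswap j)).choose with hρ
  have hρs : ∀ j, b.succAbove (ρ j) = Equiv.swap a b (g j) :=
    fun j => (Fin.exists_succAbove_eq (hswap j)).choose_spec
  have hρinj : Function.Injective ρ := by
    intro j j' hjj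
    have : Equiv.swap a b (g j) = Equiv.swap a b (g j') := by
      rw [← hρs j, ← hρs j', hjj]
    exact hg ((Equiv.swap a b).injective this)
  have hρbij : Function.Bijective ρ := Finite.injective_iff_bijective.mp hρinj
  set σ : Equiv.Perm (Fin n) := Equiv.ofBijective ρ hρbij with hσ
  have hmain : pcE m g e = pcE m (⇑σ) (pcE m b.succAbove e) := by
    rw [pcE_pcE]
    ext ⟨i, j⟩
    simp only [pcE_apply, Function.comp_apply]
    have hσj : σ j = ρ j := rfl
    rw [hσj, hρs j]
    by_cases hgb : g j = b
    · rw [hgb, Equiv.swap_apply_right, ha i, hb i]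
    · rw [Equiv.swap_apply_of_ne_of_ne (hag j) hgb]
  rw [hmain, coeff_of_inv hq]

end Key

def upE (m n : ℕ) (d : Fin m × Fin n →₀ ℕ) : Fin m × Fin (n+1) →₀ ℕ :=
  Finsupp.equivFunOnFinite.symm fun x => if h : (x.2 : ℕ) < n then d (x.1, ⟨x.2, h⟩) else 0

@[simp] lemma upE_apply (m n : ℕ) (d : Fin m × Fin n →₀ ℕ) (i : Fin m) (j : Fin (n+1)) :
    upE m n d (i, j) = if h : (j : ℕ) < n then d (i, ⟨j, h⟩) else 0 := rfl

lemma upE_castSucc (m n : ℕ) (d : Fin m × Fin n →₀ ℕ) (i : Fin m) (j : Fin n) :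
    upE m n d (i, j.castSucc) = d (i, j) := by
  simp [Fin.is_lt]

lemma upE_last (m n : ℕ) (d : Fin m × Fin n →₀ ℕ) (i : Fin m) :
    upE m n d (i, Fin.last n) = 0 := by
  simp

lemma pcE_castSucc_upE (m n : ℕ) (d : Fin m × Fin n →₀ ℕ) :
    pcE m Fin.castSucc (upE m n d) = d := by
  ext ⟨i, j⟩
  rw [pcE_apply, upE_castSucc]

lemma wdeg_upE (m n : ℕ) (d : Fin m × Fin n →₀ ℕ) :
    wdeg m (n+1) (upE m n d) = wdeg m n d := by
  funext i
  unfold wdeg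
  rw [Fin.sum_univ_castSucc]
  simp [upE_castSucc, upE_last]

lemma projDown_monomial (m n : ℕ) (e : Fin m × Fin (n+1) →₀ ℕ) (r : R) :
    projDown R m n (monomial e r) =
      if ∀ i, e (i, Fin.last n) = 0 then monomial (pcE m Fin.castSucc e) r else 0 := by
  classical
  rw [projDown, aeval_monomial]
  rw [Finsupp.prod_fintype]
  swap
  · intro x; exact pow_zero _
  by_cases hz : ∀ i, e (i, Fin.last n) = 0
  · rw [if_pos hz, monomial_eq, Finsupp.prod_fintype]
    swap
    · intro x; exact pow_zero _
    congr 1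
    rw [Fintype.prod_prod_type, Fintype.prod_prod_type]
    apply Finset.prod_congr rfl
    intro i _
    rw [Fin.prod_univ_castSucc]
    have hlast : (if h : ((Fin.last n : Fin (n+1)) : ℕ) < n then
        (X (i, ⟨(Fin.last n : Fin (n+1)), h⟩) : MvPolynomial (Fin m × Fin n) R) else 0)
          ^ e (i, Fin.last n) = 1 := by
      rw [hz i, pow_zero]
    rw [hlast, mul_one]
    apply Finset.prod_congr rfl
    intro j _
    have hlt : ((j.castSucc : Fin (n+1)) : ℕ) < n := j.is_lt
    rw [dif_pos hlt]
    congr 1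
  · rw [if_neg hz]
    push_neg at hz
    obtain ⟨i, hi⟩ := hz
    rw [Fintype.prod_prod_type]
    have : ∏ j : Fin (n+1), (if h : (j : ℕ) < n then
        (X (i, ⟨j, h⟩) : MvPolynomial (Fin m × Fin n) R) else 0) ^ e (i, j) = 0 := by
      apply Finset.prod_eq_zero (Finset.mem_univ (Fin.last n))
      rw [dif_neg (by simp), zero_pow hi]
    rw [Finset.prod_eq_zero (Finset.mem_univ i) this, mul_zero]

lemma coeff_projDown (m n : ℕ) (p : MvPolynomial (Fin m × Fin (n+1)) R)
    (d : Fin m × Fin n →₀ ℕ) :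
    coeff d (projDown R m n p) = coeff (upE m n d) p := by
  induction p using MvPolynomial.induction_on' with
  | monomial e r =>
    rw [projDown_monomial]
    by_cases hz : ∀ i, e (i, Fin.last n) = 0
    · rw [if_pos hz, coeff_monomial, coeff_monomial]
      congr 1
      simp only [eq_iff_iff]
      constructor
      · rintro rfl
        ext ⟨i, j⟩
        rw [upE_apply]
        split_ifs with h
        · rw [pcE_apply]
          congr 1
        · have hj : j = Fin.last n := by
            ext
            rw [Fin.val_last]
            have := j.is_lt
            omega
          rw [hj]
          exact hz i
      · rintro rfl
        exact pcE_castSucc_upE m n d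
    · rw [if_neg hz, coeff_zero, coeff_monomial]
      rw [if_neg]
      rintro rfl
      exact hz fun i => upE_last m n d i
  | add p q hp hq =>
    rw [map_add, coeff_add, coeff_add, hp, hq]

def extPerm (n : ℕ) (σ : Equiv.Perm (Fin n)) : Equiv.Perm (Fin (n+1)) where
  toFun j := if h : (j : ℕ) < n then (σ ⟨j, h⟩).castSucc else j
  invFun j := if h : (j : ℕ) < n then (σ⁻¹ ⟨j, h⟩).castSucc else j
  left_inv := by
    intro j
    dsimp only
    by_cases h : (j : ℕ) < n
    · rw [dif_pos h, dif_pos (by simpa using (σ ⟨j, h⟩).is_lt)]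
      ext
      simp
    · rw [dif_neg h, dif_neg h]
  right_inv := by
    intro j
    dsimp only
    by_cases h : (j : ℕ) < n
    · rw [dif_pos h, dif_pos (by simpa using (σ⁻¹ ⟨j, h⟩).is_lt)]
      ext
      simp
    · rw [dif_neg h, dif_neg h]

lemma upE_pcE (m n : ℕ) (σ : Equiv.Perm (Fin n)) (e : Fin m × Fin n →₀ ℕ) :
    upE m n (pcE m (⇑σ) e) = pcE m (⇑(extPerm n σ)) (upE m n e) := by
  ext ⟨i, j⟩
  rw [pcE_apply, upE_apply]
  by_cases h : (j : ℕ) < n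
  · rw [dif_pos h, pcE_apply]
    have : extPerm n σ j = (σ ⟨j, h⟩).castSucc := dif_pos h
    rw [this, upE_castSucc]
  · rw [dif_neg h]
    have : extPerm n σ j = j := dif_neg h
    rw [this, upE_apply, dif_neg h]

section Lift
variable {m n : ℕ}

def cF (q : MvPolynomial (Fin m × Fin n) R) (e : Fin m × Fin (n+1) →₀ ℕ) : R :=
  if h : ∃ j, ∀ i, e (i, j) = 0 then coeff (pcE m h.choose.succAbove e) q else 0

def TS (q : MvPolynomial (Fin m × Fin n) R) : Finset (Fin m × Fin (n+1) →₀ ℕ) :=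
  q.support.biUnion fun d =>
    Finset.image (fun σ : Equiv.Perm (Fin (n+1)) => pcE m (⇑σ) (upE m n d)) Finset.univ

def liftP (q : MvPolynomial (Fin m × Fin n) R) : MvPolynomial (Fin m × Fin (n+1)) R :=
  ∑ e ∈ TS q, monomial e (cF q e)

lemma mem_TS {q : MvPolynomial (Fin m × Fin n) R} {e : Fin m × Fin (n+1) →₀ ℕ} :
    e ∈ TS q ↔ ∃ d ∈ q.support, ∃ σ : Equiv.Perm (Fin (n+1)), pcE m (⇑σ) (upE m n d) = e := by
  simp [TS]

lemma TS_stable {q : MvPolynomial (Fin m × Fin n) R} {e : Fin m × Fin (n+1) →₀ ℕ}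
    (τ : Equiv.Perm (Fin (n+1))) (he : e ∈ TS q) : pcE m (⇑τ) e ∈ TS q := by
  rw [mem_TS] at he ⊢
  obtain ⟨d, hd, σ, rfl⟩ := he
  refine ⟨d, hd, τ.trans σ, ?_⟩
  rw [pcE_pcE]
  rfl

lemma coeff_liftP (q : MvPolynomial (Fin m × Fin n) R) (x : Fin m × Fin (n+1) →₀ ℕ) :
    coeff x (liftP q) = if x ∈ TS q then cF q x else 0 := by
  rw [liftP, MvPolynomial.coeff_sum]
  simp only [coeff_monomial]
  exact Finset.sum_ite_eq' (TS q) x (cF q)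

lemma cF_pcE {q : MvPolynomial (Fin m × Fin n) R}
    (hq : ∀ σ : Equiv.Perm (Fin n), permRename m n σ q = q)
    (τ : Equiv.Perm (Fin (n+1))) (e : Fin m × Fin (n+1) →₀ ℕ) :
    cF q (pcE m (⇑τ) e) = cF q e := by
  have hiff : (∃ j, ∀ i, pcE m (⇑τ) e (i, j) = 0) ↔ (∃ j, ∀ i, e (i, j) = 0) := by
    constructor
    · rintro ⟨j, hj⟩
      exact ⟨τ j, fun i => hj i⟩
    · rintro ⟨j, hj⟩
      refine ⟨τ⁻¹ j, fun i => ?_⟩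
      rw [pcE_apply, show τ (τ⁻¹ j) = j from τ.apply_symm_apply j]
      exact hj i
  rw [cF, cF]
  by_cases h2 : ∃ j, ∀ i, e (i, j) = 0
  · have h1 : ∃ j, ∀ i, pcE m (⇑τ) e (i, j) = 0 := hiff.mpr h2
    rw [dif_pos h1, dif_pos h2, pcE_pcE]
    exact key_coeff hq e (τ h1.choose) h2.choose
      (fun i => h1.choose_spec i) h2.choose_spec
      (⇑τ ∘ h1.choose.succAbove)
      (τ.injective.comp Fin.succAbove_right_injective)
      (fun j hj => Fin.succAbove_ne h1.choose j (τ.injective hj))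
  · rw [dif_neg (fun h1 => h2 (hiff.mp h1)), dif_neg h2]

lemma cF_upE {q : MvPolynomial (Fin m × Fin n) R}
    (hq : ∀ σ : Equiv.Perm (Fin n), permRename m n σ q = q)
    (d : Fin m × Fin n →₀ ℕ) : cF q (upE m n d) = coeff d q := by
  have h : ∃ j, ∀ i, upE m n d (i, j) = 0 := ⟨Fin.last n, fun i => upE_last m n d i⟩
  rw [cF, dif_pos h]
  have := key_coeff hq (upE m n d) h.choose (Fin.last n)
    h.choose_spec (fun i => upE_last m n d i)
    h.choose.succAbove Fin.succAbove_right_injective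
    (fun j => Fin.succAbove_ne h.choose j)
  rw [this, Fin.succAbove_last, pcE_castSucc_upE]

lemma wdeg_pcE_perm {k : ℕ} (σ : Equiv.Perm (Fin k)) (e : Fin m × Fin k →₀ ℕ) :
    wdeg m k (pcE m (⇑σ) e) = wdeg m k e := by
  funext i
  unfold wdeg
  simp only [pcE_apply]
  exact Fintype.sum_equiv σ _ _ (fun j => rfl)

end Lift

/-- the restriction map πₙ₊₁ : A_R(n+1,m) → A_R(n,m) maps the Sₙ₊₁-invariants
of each multidegree-a component onto the Sₙ-invariants of that component. -/
theorem stmt16 (R : Type*) [CommRing R] (m n : ℕ) (a : Fin m → ℕ) :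
    Submodule.map (projDown R m n).toLinearMap
        (invSub R m (n + 1) ⊓ comp R m (n + 1) a) =
      invSub R m n ⊓ comp R m n a := by
  apply le_antisymm
  · rintro x hx
    rw [Submodule.mem_map] at hx
    obtain ⟨p, hp, rfl⟩ := hx
    rw [Submodule.mem_inf] at hp
    obtain ⟨hinv, hcomp⟩ := hp
    have hinv' : ∀ σ : Equiv.Perm (Fin (n+1)), permRename m (n+1) σ p = p := hinv
    rw [AlgHom.toLinearMap_apply, Submodule.mem_inf]
    constructor
    · intro σ
      apply MvPolynomial.ext
      intro e
      rw [coeff_permRename, coeff_projDown, coeff_projDown, upE_pcE,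
        coeff_of_inv hinv']
    · intro d hd
      rw [MvPolynomial.mem_support_iff, coeff_projDown] at hd
      have := hcomp (upE m n d) (MvPolynomial.mem_support_iff.mpr hd)
      rw [← wdeg_upE m n d]
      exact this
  · intro q hq
    rw [Submodule.mem_inf] at hq
    obtain ⟨hinv, hcomp⟩ := hq
    have hinv' : ∀ σ : Equiv.Perm (Fin n), permRename m n σ q = q := hinv
    rw [Submodule.mem_map]
    refine ⟨liftP q, ?_, ?_⟩
    · rw [Submodule.mem_inf]
      constructor
    -- invariance of the lift
      · intro σ
        apply MvPolynomial.ext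
        intro e
        rw [coeff_permRename, coeff_liftP, coeff_liftP]
        have hmem : (pcE m (⇑σ) e ∈ TS q) ↔ (e ∈ TS q) := by
          constructor
          · intro h
            have := TS_stable σ⁻¹ h
            rwa [pcE_pcE, show (⇑σ ∘ ⇑σ⁻¹ : Fin (n+1) → Fin (n+1)) = id from
              funext fun j => σ.apply_symm_apply j, show pcE m id e = e from
              Finsupp.ext fun x => rfl] at this
          · exact TS_stable σ
        have hc := cF_pcE hinv' σ e
        by_cases h : e ∈ TS q
        · rw [if_pos (hmem.mpr h), if_pos h, hc]
        · rw [if_neg (fun h' => h (hmem.mp h')), if_neg h]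
    -- lift lies in the multidegree-a component
      · intro e he
        rw [MvPolynomial.mem_support_iff, coeff_liftP] at he
        by_cases h : e ∈ TS q
        · obtain ⟨d, hd, σ, rfl⟩ := mem_TS.mp h
          rw [wdeg_pcE_perm, wdeg_upE]
          exact hcomp d hd
        · rw [if_neg h] at he
          exact absurd rfl he
    -- the lift maps to q
    · rw [AlgHom.toLinearMap_apply]
      apply MvPolynomial.ext
      intro d
      rw [coeff_projDown, coeff_liftP]
      by_cases h : upE m n d ∈ TS q
      · rw [if_pos h, cF_upE hinv']
      · rw [if_neg h]
        by_contra hc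
        apply h
        rw [mem_TS]
        refine ⟨d, MvPolynomial.mem_support_iff.mpr fun h0 => hc h0.symm, 1, ?_⟩
        ext ⟨i, j⟩
        rw [pcE_apply]
        rfl

end
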